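/- Let (X₁, Γ₁, Φ₁) and (X₂, Γ₂, Φ₂) be minimal equicontinuous Cantor actions which are return equivalent. Then for any basepoints x₁ ∈ X₁ and x₂ ∈ X₂, the relative Steinitz orders Π[G(Φ₁) : D(Φ₁,x₁)] and Π[G(Φ₂) : D(Φ₂,x₂)] are asymptotically equivalent Steinitz numbers. -/

import Mathlib

noncomputable section

open Set Topology

/-! ### The group of homeomorphisms -/

namespace Homeomorph

variable {X : Type*} [TopologicalSpace X]

instance instGroup' : Group (X ≃ₜ X) where
  mul f g := g.trans f
  one := Homeomorph.refl X
  inv := Homeomorph.symm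
  mul_assoc f g h := rfl
  one_mul f := rfl
  mul_one f := rfl
  inv_mul_cancel f := Homeomorph.ext fun x => f.symm_apply_apply x

@[simp] theorem mul_apply' (f g : X ≃ₜ X) (x : X) : (f * g) x = f (g x) := rfl
@[simp] theorem one_apply' (x : X) : (1 : X ≃ₜ X) x = x := rfl
@[simp] theorem inv_eq_symm (f : X ≃ₜ X) : f⁻¹ = f.symm := rfl

/-- The uniform topology (topology of uniform convergence, equivalently for a compact
metric space the compact-open topology) on the group of homeomorphisms of a compact
metric space, as the metric topology of the sup-metric. -/
instance instMetricSpaceHomeomorph {Y : Type*} [MetricSpace Y] [CompactSpace Y] :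
    MetricSpace (Y ≃ₜ Y) :=
  MetricSpace.induced (fun h => (⟨h, h.continuous⟩ : C(Y, Y)))
    (fun f g hfg => Homeomorph.ext fun x => congrFun (congrArg ContinuousMap.toFun hfg) x)
    inferInstance

end Homeomorph

namespace Homeomorph

variable {Y : Type*} [MetricSpace Y] [CompactSpace Y]

theorem dist_eq_contMap (f g : Y ≃ₜ Y) :
    dist f g = dist (⟨f, f.continuous⟩ : C(Y, Y)) (⟨g, g.continuous⟩ : C(Y, Y)) := rfl

theorem dist_apply_le (f g : Y ≃ₜ Y) (x : Y) : dist (f x) (g x) ≤ dist f g :=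
  ContinuousMap.dist_apply_le_dist (f := (⟨f, f.continuous⟩ : C(Y, Y)))
    (g := (⟨g, g.continuous⟩ : C(Y, Y))) x

theorem dist_lt_iff' (f g : Y ≃ₜ Y) {C : ℝ} (hC : 0 < C) :
    dist f g < C ↔ ∀ x : Y, dist (f x) (g x) < C := by
  rw [dist_eq_contMap, ContinuousMap.dist_lt_iff hC]
  rfl

instance : IsTopologicalGroup (Y ≃ₜ Y) where
  continuous_mul := by
    rw [Metric.continuous_iff]
    rintro ⟨f₀, g₀⟩ ε hε
    obtain ⟨δ₁, hδ₁, H₁⟩ := Metric.uniformContinuous_iff.mp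
      (CompactSpace.uniformContinuous_of_continuous f₀.continuous) (ε / 2) (by positivity)
    refine ⟨min δ₁ (ε / 2), by positivity, ?_⟩
    rintro ⟨f, g⟩ hd
    have hdf : dist f f₀ < ε / 2 := by
      have h' : dist f f₀ ≤ dist ((f, g)) ((f₀, g₀)) := by
        rw [Prod.dist_eq]; exact le_max_left _ _
      exact (h'.trans_lt hd).trans_le (min_le_right _ _)
    have hdg : dist g g₀ < δ₁ := by
      have h' : dist g g₀ ≤ dist ((f, g)) ((f₀, g₀)) := by
        rw [Prod.dist_eq]; exact le_max_right _ _
      exact (h'.trans_lt hd).trans_le (min_le_left _ _)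
    rw [dist_lt_iff' _ _ hε]
    intro x
    have h1 : dist (f (g x)) (f₀ (g x)) < ε / 2 :=
      lt_of_le_of_lt (dist_apply_le f f₀ (g x)) hdf
    have h2 : dist (f₀ (g x)) (f₀ (g₀ x)) < ε / 2 :=
      H₁ (lt_of_le_of_lt (dist_apply_le g g₀ x) hdg)
    calc dist ((f * g) x) ((f₀ * g₀) x) ≤ dist (f (g x)) (f₀ (g x)) + dist (f₀ (g x)) (f₀ (g₀ x)) :=
          dist_triangle _ _ _
      _ < ε / 2 + ε / 2 := by exact add_lt_add h1 h2
      _ = ε := by ring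
  continuous_inv := by
    rw [Metric.continuous_iff]
    intro f₀ ε hε
    obtain ⟨δ, hδ, H⟩ := Metric.uniformContinuous_iff.mp
      (CompactSpace.uniformContinuous_of_continuous f₀.symm.continuous) ε hε
    refine ⟨δ, hδ, ?_⟩
    intro g hdg
    rw [dist_lt_iff' _ _ hε]
    intro y
    have key : dist (g (g.symm y)) (f₀ (g.symm y)) < δ :=
      lt_of_le_of_lt (dist_apply_le g f₀ (g.symm y)) hdg
    have h2 := H key
    have h3 : dist (f₀.symm (g (g.symm y))) (f₀.symm (f₀ (g.symm y))) < ε := h2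
    rw [Homeomorph.apply_symm_apply, Homeomorph.symm_apply_apply] at h3
    rw [dist_comm] at h3
    simpa using h3
end Homeomorph

/-! ### Steinitz (supernatural) numbers -/

/-- A Steinitz number: a formal product of primes with exponents in `ℕ∞`. -/
def SteinitzNum : Type := Nat.Primes → ℕ∞

namespace SteinitzNum

/-- The Steinitz number associated to a natural number. -/
def ofNat (n : ℕ) : SteinitzNum := fun p => (n.factorization (p : ℕ) : ℕ∞)

/-- Multiplication of Steinitz numbers adds the exponents at each prime. -/
instance : Mul SteinitzNum := ⟨fun a b p => a p + b p⟩

/-- The least common multiple of a collection of positive integers, as a Steinitz number: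
its exponent at `p` is the supremum of the `p`-adic valuations of the elements. -/
def lcmSet (S : Set ℕ) : SteinitzNum := fun p => ⨆ n ∈ S, (n.factorization (p : ℕ) : ℕ∞)

/-- Two Steinitz numbers are asymptotically equivalent if they agree after multiplication
by positive integers. -/
def AsympEquiv (a b : SteinitzNum) : Prop :=
  ∃ n₀ m₀ : ℕ, 0 < n₀ ∧ 0 < m₀ ∧ ofNat n₀ * a = ofNat m₀ * b

/-- The prime spectrum of a Steinitz number: primes with nonzero exponent. -/
def primeSpectrum (a : SteinitzNum) : Set Nat.Primes := { p | a p ≠ 0 }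

/-- The finite prime spectrum: primes with finite nonzero exponent. -/
def finitePrimeSpectrum (a : SteinitzNum) : Set Nat.Primes := { p | a p ≠ 0 ∧ a p ≠ ⊤ }

/-- The infinite prime spectrum: primes with infinite exponent. -/
def infinitePrimeSpectrum (a : SteinitzNum) : Set Nat.Primes := { p | a p = ⊤ }

end SteinitzNum

/-! ### Steinitz orders for topological groups -/

/-- The Steinitz order of a topological group: the LCM of the orders of the finite
quotients `G/N` over open normal subgroups `N ⊆ G`. -/
def steinitzOrder (G : Type*) [Group G] [TopologicalSpace G] : SteinitzNum :=
  SteinitzNum.lcmSet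
    { n | ∃ N : Subgroup G, N.Normal ∧ IsOpen (N : Set G) ∧ n = Nat.card (G ⧸ N) }

/-- The Steinitz order of a subgroup `D` of a topological group `G`: the LCM of the
cardinalities `|D/(N ∩ D)|` over open normal subgroups `N ⊆ G`. -/
def steinitzOrderOfSubgroup {G : Type*} [Group G] [TopologicalSpace G] (D : Subgroup G) :
    SteinitzNum :=
  SteinitzNum.lcmSet
    { n | ∃ N : Subgroup G, N.Normal ∧ IsOpen (N : Set G) ∧
        n = Nat.card (↥D ⧸ (N.subgroupOf D)) }

/-- The relative Steinitz order of a subgroup `D` of a topological group `G`: the LCM of the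
cardinalities `|G/(N · D)|` over open normal subgroups `N ⊆ G`. -/
def steinitzRelativeOrder {G : Type*} [Group G] [TopologicalSpace G] (D : Subgroup G) :
    SteinitzNum :=
  SteinitzNum.lcmSet
    { n | ∃ N : Subgroup G, N.Normal ∧ IsOpen (N : Set G) ∧ n = Nat.card (G ⧸ (N ⊔ D)) }

/-- A profinite (compact Hausdorff totally disconnected) topological group is topologically
Noetherian if every increasing chain of closed subgroups has a maximal element. -/
def TopologicallyNoetherian (G : Type*) [Group G] [TopologicalSpace G] : Prop :=
  ∀ c : ℕ → Subgroup G, (∀ i, IsClosed (c i : Set G)) → Monotone c → ∃ i₀, ∀ i, c i ≤ c i₀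


/-! Steinitz algebra -/

namespace SteinitzNum

theorem ofNat_one_mul (a : SteinitzNum) : ofNat 1 * a = a := by
  funext p
  show ofNat 1 p + a p = a p
  simp [ofNat]

theorem ofNat_mul_ofNat {m n : ℕ} (hm : m ≠ 0) (hn : n ≠ 0) :
    ofNat (m * n) = ofNat m * ofNat n := by
  funext p
  show (((m * n).factorization (p : ℕ) : ℕ∞)) = (m.factorization (p : ℕ) : ℕ∞) + _
  rw [Nat.factorization_mul hm hn, Finsupp.add_apply, Nat.cast_add]
  rfl

theorem mul_comm' (a b : SteinitzNum) : a * b = b * a := funext fun _ => add_comm _ _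

theorem mul_assoc' (a b c : SteinitzNum) : a * b * c = a * (b * c) :=
  funext fun _ => add_assoc _ _ _

theorem AsympEquiv.refl' {a : SteinitzNum} : AsympEquiv a a :=
  ⟨1, 1, one_pos, one_pos, by rfl⟩

theorem AsympEquiv.of_eq {a b : SteinitzNum} (h : a = b) : AsympEquiv a b :=
  ⟨1, 1, one_pos, one_pos, by rw [h]⟩

theorem AsympEquiv.symm {a b : SteinitzNum} (h : AsympEquiv a b) : AsympEquiv b a := by
  obtain ⟨n, m, hn, hm, h⟩ := h
  exact ⟨m, n, hm, hn, h.symm⟩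

theorem AsympEquiv.trans {a b c : SteinitzNum} (h : AsympEquiv a b) (h' : AsympEquiv b c) :
    AsympEquiv a c := by
  obtain ⟨n₀, m₀, hn₀, hm₀, h⟩ := h
  obtain ⟨n₁, m₁, hn₁, hm₁, h'⟩ := h'
  refine ⟨n₁ * n₀, m₀ * m₁, Nat.mul_pos hn₁ hn₀, Nat.mul_pos hm₀ hm₁, ?_⟩
  rw [ofNat_mul_ofNat hn₁.ne' hn₀.ne', ofNat_mul_ofNat hm₀.ne' hm₁.ne',
    mul_assoc', h, ← mul_assoc', mul_comm' (ofNat n₁) (ofNat m₀), mul_assoc', h', ← mul_assoc']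

theorem lcmSet_eq_ofNat_mul {S T : Set ℕ} {m : ℕ} (hm : m ≠ 0) (hT : T.Nonempty)
    (h1 : ∀ n ∈ S, n ≠ 0 ∧ ∃ k ∈ T, k ≠ 0 ∧ n ∣ m * k)
    (h2 : ∀ k ∈ T, k ≠ 0 ∧ m * k ∈ S) :
    lcmSet S = ofNat m * lcmSet T := by
  funext p
  haveI : Nonempty ↥T := hT.to_subtype
  set v : ℕ → ℕ∞ := fun n => (n.factorization (p : ℕ) : ℕ∞) with hv
  have hmul : ∀ {a b : ℕ}, a ≠ 0 → b ≠ 0 → v (a * b) = v a + v b := by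
    intro a b ha hb
    simp only [hv, Nat.factorization_mul ha hb, Finsupp.add_apply, Nat.cast_add]
  show (⨆ n ∈ S, v n) = v m + ⨆ k ∈ T, v k
  rw [show (⨆ k ∈ T, v k) = ⨆ k : T, v (k : ℕ) from
      iSup_subtype' (p := fun k => k ∈ T) (f := fun k _ => v k),
    ENat.add_iSup]
  apply le_antisymm
  · apply iSup₂_le
    intro n hn
    obtain ⟨hn0, k, hkT, hk0, hdvd⟩ := h1 n hn
    have hle : n.factorization ≤ (m * k).factorization :=
      (Nat.factorization_le_iff_dvd hn0 (mul_ne_zero hm hk0)).2 hdvd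
    have h3 : v n ≤ v (m * k) := by
      simp only [hv, Nat.cast_le]
      exact hle (p : ℕ)
    refine h3.trans ?_
    rw [hmul hm hk0]
    exact le_iSup_of_le (⟨k, hkT⟩ : T) le_rfl
  · apply iSup_le
    rintro ⟨k, hkT⟩
    obtain ⟨hk0, hmem⟩ := h2 k hkT
    rw [show v m + v k = v (m * k) from (hmul hm hk0).symm]
    exact le_iSup₂_of_le (m * k) hmem le_rfl

end SteinitzNum

section GroupAux

/-- Coset space equivalence under a surjective homomorphism. -/
noncomputable def quotientCosetEquivAux {G : Type*} [Group G] {Q : Type*} [Group Q] (ρ : G →* Q)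
    (hs : Function.Surjective ρ) (H : Subgroup Q) :
    (G ⧸ H.comap ρ) ≃ (Q ⧸ H) := by
  refine Equiv.ofBijective (Quotient.map' ρ ?_) ⟨?_, ?_⟩
  · intro x y h
    rw [QuotientGroup.leftRel_apply] at h ⊢
    simpa using h
  · intro a b
    refine Quotient.inductionOn₂' a b fun x y h => ?_
    apply Quotient.sound'
    have h2 := Quotient.exact' h
    rw [QuotientGroup.leftRel_apply] at h2 ⊢
    simpa using h2
  · intro q
    refine Quotient.inductionOn' q fun y => ?_
    obtain ⟨x, rfl⟩ := hs y
    exact ⟨Quotient.mk'' x, rfl⟩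

/-- The relative Steinitz order is invariant under continuous surjections of compact
groups whose kernel is contained in the distinguished subgroup. -/
theorem steinitzRelativeOrder_map_eq
    {G : Type*} [Group G] [TopologicalSpace G] [IsTopologicalGroup G] [CompactSpace G]
    {Q : Type*} [Group Q] [TopologicalSpace Q] [T2Space Q]
    (ρ : G →* Q) (hc : Continuous ρ) (hs : Function.Surjective ρ)
    (D : Subgroup G) (hker : ρ.ker ≤ D) :
    steinitzRelativeOrder (Subgroup.map ρ D) = steinitzRelativeOrder D := by
  have hq : Topology.IsQuotientMap ρ := (hc.isClosedMap).isQuotientMap hc hs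
  have hcomap : ∀ N : Subgroup G,
      Subgroup.comap ρ (Subgroup.map ρ (N ⊔ D)) = N ⊔ D := by
    intro N
    rw [Subgroup.comap_map_eq, sup_assoc, sup_eq_left.mpr hker]
  unfold steinitzRelativeOrder
  apply congrArg SteinitzNum.lcmSet
  ext n
  constructor
  · rintro ⟨M, hMn, hMo, rfl⟩
    refine ⟨Subgroup.comap ρ M, Subgroup.Normal.comap hMn ρ, hMo.preimage hc, ?_⟩
    have h1 : M ⊔ Subgroup.map ρ D = Subgroup.map ρ (Subgroup.comap ρ M ⊔ D) := by
      rw [Subgroup.map_sup, Subgroup.map_comap_eq_self_of_surjective hs]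
    have h2 : Subgroup.comap ρ (M ⊔ Subgroup.map ρ D) = Subgroup.comap ρ M ⊔ D := by
      rw [h1, hcomap]
    rw [← h2]
    exact (Nat.card_congr (quotientCosetEquivAux ρ hs (M ⊔ Subgroup.map ρ D))).symm
  · rintro ⟨N, hNn, hNo, rfl⟩
    refine ⟨Subgroup.map ρ N, Subgroup.Normal.map hNn ρ hs, ?_, ?_⟩
    · rw [← hq.isOpen_preimage]
      have h3 : (ρ ⁻¹' ((Subgroup.map ρ N : Subgroup Q) : Set Q))
          = ((Subgroup.comap ρ (Subgroup.map ρ N)) : Set G) := rfl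
      rw [h3, Subgroup.comap_map_eq]
      exact Subgroup.isOpen_mono le_sup_left hNo
    · rw [← Subgroup.map_sup]
      have h4 := Nat.card_congr (quotientCosetEquivAux ρ hs (Subgroup.map ρ (N ⊔ D)))
      rw [hcomap N] at h4
      exact h4

/-- The relative Steinitz order only changes by asymptotic equivalence when passing to an
open subgroup containing the distinguished subgroup. -/
theorem steinitzRelativeOrder_asympEquiv_subgroupOf
    {G : Type*} [Group G] [TopologicalSpace G] [IsTopologicalGroup G] [CompactSpace G]
    (G' : Subgroup G) (hG'o : IsOpen (G' : Set G)) (D : Subgroup G) (hDG' : D ≤ G') :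
    SteinitzNum.AsympEquiv (steinitzRelativeOrder D)
      (steinitzRelativeOrder (D.subgroupOf G')) := by
  classical
  have hfin : ∀ H : Subgroup G, IsOpen (H : Set G) → H.index ≠ 0 := by
    intro H hH
    haveI := H.quotient_finite_of_isOpen hH
    haveI : H.FiniteIndex := H.finiteIndex_of_finite_quotient
    exact Subgroup.FiniteIndex.index_ne_zero
  have hG'c : IsClosed (G' : Set G) := Subgroup.isClosed_of_isOpen G' hG'o
  haveI : CompactSpace G' := isCompact_iff_compactSpace.mp hG'c.isCompact
  have hfin' : ∀ H : Subgroup ↥G', IsOpen (H : Set ↥G') → H.index ≠ 0 := by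
    intro H hH
    haveI := H.quotient_finite_of_isOpen hH
    haveI : H.FiniteIndex := H.finiteIndex_of_finite_quotient
    exact Subgroup.FiniteIndex.index_ne_zero
  haveI := G'.quotient_finite_of_isOpen hG'o
  haveI : G'.FiniteIndex := G'.finiteIndex_of_finite_quotient
  set m := G'.index with hm
  have hm0 : m ≠ 0 := Subgroup.FiniteIndex.index_ne_zero
  set C := G'.normalCore with hCdef
  have hCn : C.Normal := G'.normalCore_normal
  have hCo : IsOpen (C : Set G) := by
    haveI : C.FiniteIndex := G'.finiteIndex_normalCore
    exact Subgroup.isOpen_of_isClosed_of_finiteIndex C (G'.normalCore_isClosed hG'c)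
  have hCle : C ≤ G' := G'.normalCore_le
  set D' := D.subgroupOf G' with hD'def
  set T : Set ℕ := {k | ∃ N : Subgroup G, N.Normal ∧ IsOpen (N : Set G) ∧ N ≤ C ∧
      k = ((N.subgroupOf G') ⊔ D').index} with hTdef
  have hTne : T.Nonempty := ⟨_, C, hCn, hCo, le_rfl, rfl⟩
  -- the key index identity
  have hkey : ∀ N : Subgroup G, N ≤ C → (N ⊔ D).index = ((N.subgroupOf G') ⊔ D').index * m := by
    intro N hNC
    have hle : N ⊔ D ≤ G' := sup_le (hNC.trans hCle) hDG'
    have h1 : (N ⊔ D).subgroupOf G' = (N.subgroupOf G') ⊔ D' := by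
      apply Subgroup.map_injective G'.subtype_injective
      have e1 : Subgroup.map G'.subtype ((N ⊔ D).subgroupOf G') = N ⊔ D := by
        rw [Subgroup.subgroupOf_map_subtype, inf_eq_left]
        exact hle
      have e2 : Subgroup.map G'.subtype ((N.subgroupOf G') ⊔ D') = N ⊔ D := by
        rw [Subgroup.map_sup, hD'def, Subgroup.subgroupOf_map_subtype,
          Subgroup.subgroupOf_map_subtype, inf_eq_left.mpr (hNC.trans hCle),
          inf_eq_left.mpr hDG']
      rw [e1, e2]
    rw [← Subgroup.relIndex_mul_index hle]
    congr 1
    rw [Subgroup.relIndex, h1]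
  -- openness and normality transfers
  have hsubn : ∀ N : Subgroup G, N.Normal → (N.subgroupOf G').Normal :=
    fun N hN => Subgroup.Normal.comap hN G'.subtype
  have hsubo : ∀ N : Subgroup G, IsOpen (N : Set G) → IsOpen ((N.subgroupOf G') : Set ↥G') :=
    fun N hN => Subgroup.subgroupOf_isOpen G' N hN
  have hinfn : ∀ (A B : Subgroup G), A.Normal → B.Normal → (A ⊓ B).Normal := by
    intro A B hA hB
    exact ⟨fun x hx g => Subgroup.mem_inf.mpr
      ⟨hA.conj_mem x (Subgroup.mem_inf.mp hx).1 g, hB.conj_mem x (Subgroup.mem_inf.mp hx).2 g⟩⟩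
  have hinfo : ∀ (A B : Subgroup G), IsOpen (A : Set G) → IsOpen (B : Set G) →
      IsOpen ((A ⊓ B : Subgroup G) : Set G) := by
    intro A B hA hB
    have : ((A ⊓ B : Subgroup G) : Set G) = (A : Set G) ∩ B := rfl
    rw [this]
    exact hA.inter hB
  -- value in T is finite-positive
  have hTval : ∀ N : Subgroup G, N.Normal → IsOpen (N : Set G) →
      ((N.subgroupOf G') ⊔ D').index ≠ 0 := by
    intro N _ hNo
    exact hfin' _ (Subgroup.isOpen_mono le_sup_left (hsubo N hNo))
  have e1 : steinitzRelativeOrder D = SteinitzNum.ofNat m * SteinitzNum.lcmSet T := by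
    unfold steinitzRelativeOrder
    refine SteinitzNum.lcmSet_eq_ofNat_mul hm0 hTne ?_ ?_
    · rintro n ⟨N, hNn, hNo, rfl⟩
      rw [← Subgroup.index_eq_card]
      refine ⟨hfin _ (Subgroup.isOpen_mono le_sup_left hNo), _,
        ⟨N ⊓ C, hinfn N C hNn hCn, hinfo N C hNo hCo, inf_le_right, rfl⟩,
        hTval _ (hinfn N C hNn hCn) (hinfo N C hNo hCo), ?_⟩
      rw [Nat.mul_comm, ← hkey _ inf_le_right]
      exact Subgroup.index_dvd_of_le (sup_le_sup_right inf_le_left D)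
    · rintro k ⟨N, hNn, hNo, hNC, rfl⟩
      refine ⟨hTval N hNn hNo, N, hNn, hNo, ?_⟩
      rw [← Subgroup.index_eq_card, hkey N hNC, Nat.mul_comm]
  have e2 : steinitzRelativeOrder D' = SteinitzNum.ofNat 1 * SteinitzNum.lcmSet T := by
    unfold steinitzRelativeOrder
    refine SteinitzNum.lcmSet_eq_ofNat_mul one_ne_zero hTne ?_ ?_
    · rintro n ⟨N', hN'n, hN'o, rfl⟩
      rw [← Subgroup.index_eq_card]
      -- push N' to G and take its normal core
      set H : Subgroup G := Subgroup.map G'.subtype N' with hHdef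
      have hHo : IsOpen (H : Set G) := by
        rw [hHdef, Subgroup.coe_map]
        exact hG'o.isOpenMap_subtype_val _ hN'o
      have hHcore_o : IsOpen ((H.normalCore : Subgroup G) : Set G) := by
        haveI := H.quotient_finite_of_isOpen hHo
        haveI : H.FiniteIndex := H.finiteIndex_of_finite_quotient
        haveI : H.normalCore.FiniteIndex := H.finiteIndex_normalCore
        exact Subgroup.isOpen_of_isClosed_of_finiteIndex _
          (H.normalCore_isClosed (Subgroup.isClosed_of_isOpen H hHo))
      set N : Subgroup G := H.normalCore ⊓ C with hNdef
      have hNn : N.Normal := hinfn _ _ H.normalCore_normal hCn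
      have hNo : IsOpen (N : Set G) := hinfo _ _ hHcore_o hCo
      have hNle : N.subgroupOf G' ≤ N' := by
        have h5 : N ≤ H := le_trans inf_le_left H.normalCore_le
        have h6 : H.subgroupOf G' = N' := by
          rw [hHdef, Subgroup.subgroupOf, Subgroup.comap_map_eq, Subgroup.ker_subtype,
            sup_bot_eq]
        calc N.subgroupOf G' ≤ H.subgroupOf G' := Subgroup.comap_mono h5
          _ = N' := h6
      refine ⟨hfin' _ (Subgroup.isOpen_mono le_sup_left hN'o), _,
        ⟨N, hNn, hNo, inf_le_right, rfl⟩, hTval N hNn hNo, ?_⟩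
      rw [Nat.one_mul]
      exact Subgroup.index_dvd_of_le (sup_le_sup_right hNle D')
    · rintro k ⟨N, hNn, hNo, hNC, rfl⟩
      refine ⟨hTval N hNn hNo, N.subgroupOf G', hsubn N hNn, hsubo N hNo, ?_⟩
      rw [Nat.one_mul, ← Subgroup.index_eq_card]
  refine ⟨1, m, Nat.one_pos, Nat.pos_of_ne_zero hm0, ?_⟩
  rw [SteinitzNum.ofNat_one_mul, e1, e2, SteinitzNum.ofNat_one_mul]

end GroupAux

/-! ### Cantor actions -/

section CantorActions

variable {X : Type*} [MetricSpace X] {Γ : Type*} [Group Γ]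

/-- An action is minimal if every orbit is dense. -/
def IsMinimalAction (Φ : Γ →* (X ≃ₜ X)) : Prop :=
  ∀ x : X, Dense (Set.range fun g : Γ => Φ g x)

/-- An action is equicontinuous if it satisfies the uniform `ε`-`δ` condition with respect
to the metric. -/
def IsEquicontinuousAction (Φ : Γ →* (X ≃ₜ X)) : Prop :=
  ∀ ε : ℝ, 0 < ε → ∃ δ : ℝ, 0 < δ ∧
    ∀ x y : X, dist x y < δ → ∀ g : Γ, dist (Φ g x) (Φ g y) < ε

variable [CompactSpace X]

/-- `G(Φ)`: the closure of the image of `Γ` in `Homeo(X)`, in the uniform topology. -/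
def profiniteClosure (Φ : Γ →* (X ≃ₜ X)) : Subgroup (X ≃ₜ X) :=
  Φ.range.topologicalClosure

/-- The discriminant group: the isotropy subgroup of `G(Φ)` at `x`. -/
def discriminant (Φ : Γ →* (X ≃ₜ X)) (x : X) : Subgroup (profiniteClosure Φ) where
  carrier := { h | (h : X ≃ₜ X) x = x }
  one_mem' := rfl
  mul_mem' := by
    intro a b ha hb
    simp only [Set.mem_setOf_eq] at *
    show ((a : X ≃ₜ X) * (b : X ≃ₜ X)) x = x
    rw [Homeomorph.mul_apply', hb, ha]
  inv_mem' := by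
    intro a ha
    simp only [Set.mem_setOf_eq] at *
    show ((a : X ≃ₜ X)⁻¹) x = x
    rw [Homeomorph.inv_eq_symm]
    conv_lhs => rw [← ha]
    exact Homeomorph.symm_apply_apply _ _

/-- The Steinitz order `Π[G(Φ)]` of a Cantor action. -/
def steinitzOrderAction (Φ : Γ →* (X ≃ₜ X)) : SteinitzNum :=
  steinitzOrder ↥(profiniteClosure Φ)

/-- The Steinitz order `Π[D(Φ,x)]` of the discriminant of a Cantor action. -/
def steinitzOrderDisc (Φ : Γ →* (X ≃ₜ X)) (x : X) : SteinitzNum :=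
  steinitzOrderOfSubgroup (discriminant Φ x)

/-- The relative Steinitz order `Π[G(Φ) : D(Φ,x)]` of a Cantor action. -/
def steinitzOrderRel (Φ : Γ →* (X ≃ₜ X)) (x : X) : SteinitzNum :=
  steinitzRelativeOrder (discriminant Φ x)

end CantorActions

/-! ### Adapted sets, holonomy and return equivalence -/

section Adapted

variable {X : Type*} [MetricSpace X] {Γ : Type*} [Group Γ]

/-- A nonempty clopen subset `U ⊆ X` is adapted to the action `Φ` if every group element
either fixes `U` or moves it entirely off of itself. -/
def IsAdaptedSet (Φ : Γ →* (X ≃ₜ X)) (U : Set X) : Prop :=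
  U.Nonempty ∧ IsClopen U ∧ ∀ g : Γ, ((Φ g) '' U ∩ U).Nonempty → (Φ g) '' U = U

/-- The stabilizer subgroup `Γ_U` of an adapted set. -/
def adaptedStabilizer (Φ : Γ →* (X ≃ₜ X)) (U : Set X) : Subgroup Γ where
  carrier := { g | (Φ g) '' U = U }
  one_mem' := by show (Φ 1) '' U = U; rw [map_one]; exact Set.image_id U
  mul_mem' := by
    intro a b ha hb
    simp only [Set.mem_setOf_eq] at *
    rw [map_mul]
    show ((Φ a) * (Φ b)) '' U = U
    have : (((Φ a) * (Φ b) : X ≃ₜ X) : X → X) = (Φ a) ∘ (Φ b) := rfl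
    rw [this, Set.image_comp, hb, ha]
  inv_mem' := by
    intro a ha
    simp only [Set.mem_setOf_eq] at *
    rw [map_inv, Homeomorph.inv_eq_symm]
    conv_lhs => rw [← ha]
    rw [← Set.image_comp]
    simp

/-- The homeomorphism of an invariant set induced by a homeomorphism of `X`. -/
def restrictHomeo (h : X ≃ₜ X) {U : Set X} (hU : h '' U = U) : U ≃ₜ U :=
  (h.image U).trans (Homeomorph.setCongr hU)

@[simp] theorem restrictHomeo_coe (h : X ≃ₜ X) {U : Set X} (hU : h '' U = U) (x : U) :
    (restrictHomeo h hU x : X) = h x := rfl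

/-- The holonomy homomorphism of an adapted set: restriction of the stabilizer to `U`. -/
def holonomyHom (Φ : Γ →* (X ≃ₜ X)) (U : Set X) :
    adaptedStabilizer Φ U →* (↥U ≃ₜ ↥U) where
  toFun g := restrictHomeo (Φ (g : Γ)) g.2
  map_one' := by
    ext x
    show ((restrictHomeo (Φ ((1 : adaptedStabilizer Φ U) : Γ)) _ x : X) = _)
    simp
  map_mul' := by
    intro a b
    ext x
    show ((restrictHomeo (Φ ((a * b : adaptedStabilizer Φ U) : Γ)) _ x : X) = _)
    simp only [restrictHomeo_coe, Subgroup.coe_mul, map_mul]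
    rfl

/-- The holonomy group `H_U` of an adapted set: the image of the stabilizer in `Homeo(U)`. -/
def holonomyGroup (Φ : Γ →* (X ≃ₜ X)) (U : Set X) : Subgroup (↥U ≃ₜ ↥U) :=
  (holonomyHom Φ U).range

end Adapted

section GeomAux

open Set

variable {X : Type*} [MetricSpace X] [CompactSpace X] {Γ : Type*} [Group Γ]

/-- The canonical embedding of homeomorphisms into continuous maps. -/
def toCMap (f : X ≃ₜ X) : C(X, X) := ⟨f, f.continuous⟩

theorem dist_toCMap (f g : X ≃ₜ X) : dist (toCMap f) (toCMap g) = dist f g := rfl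

theorem homeo_dist_le {f g : X ≃ₜ X} {C : ℝ} (hC : 0 ≤ C)
    (h : ∀ x : X, dist (f x) (g x) ≤ C) : dist f g ≤ C := by
  rw [Homeomorph.dist_eq_contMap]
  exact (ContinuousMap.dist_le hC).mpr h

theorem mem_pc_iff (Φ : Γ →* (X ≃ₜ X)) (f : X ≃ₜ X) :
    f ∈ profiniteClosure Φ ↔ ∀ ε > 0, ∃ g : Γ, dist f (Φ g) < ε := by
  have h1 : f ∈ profiniteClosure Φ ↔ f ∈ closure (Φ.range : Set (X ≃ₜ X)) := Iff.rfl
  rw [h1, Metric.mem_closure_iff]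
  constructor
  · intro h ε hε
    obtain ⟨b, hb, hd⟩ := h ε hε
    obtain ⟨g, rfl⟩ := hb
    exact ⟨g, hd⟩
  · intro h ε hε
    obtain ⟨g, hd⟩ := h ε hε
    exact ⟨Φ g, ⟨g, rfl⟩, hd⟩

theorem pc_mem_of_mem_range (Φ : Γ →* (X ≃ₜ X)) (g : Γ) : Φ g ∈ profiniteClosure Φ :=
  Subgroup.le_topologicalClosure _ ⟨g, rfl⟩

/-- Uniform equicontinuity of the closure of an equicontinuous family. -/
theorem ue_closure (Φ : Γ →* (X ≃ₜ X)) (heqc : IsEquicontinuousAction Φ) :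
    ∀ ε > 0, ∃ δ > 0, ∀ f : X ≃ₜ X, f ∈ profiniteClosure Φ →
      ∀ x y : X, dist x y < δ → dist (f x) (f y) < ε := by
  intro ε hε
  obtain ⟨δ, hδ, H⟩ := heqc (ε / 3) (by positivity)
  refine ⟨δ, hδ, fun f hf x y hxy => ?_⟩
  obtain ⟨g, hg⟩ := (mem_pc_iff Φ f).mp hf (ε / 3) (by positivity)
  calc dist (f x) (f y) ≤ dist (f x) (Φ g x) + dist (Φ g x) (Φ g y) + dist (Φ g y) (f y) :=
        dist_triangle4 _ _ _ _
    _ < ε / 3 + ε / 3 + ε / 3 := by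
        refine add_lt_add (add_lt_add ?_ (H x y hxy g)) ?_
        · exact lt_of_le_of_lt (Homeomorph.dist_apply_le f (Φ g) x) hg
        · rw [dist_comm]
          exact lt_of_le_of_lt (Homeomorph.dist_apply_le f (Φ g) y) hg
    _ = ε := by ring

/-- The image of the group in `C(X,X)` is totally bounded. -/
theorem totallyBounded_toCMap [Nonempty X] (Φ : Γ →* (X ≃ₜ X))
    (heqc : IsEquicontinuousAction Φ) :
    TotallyBounded (Set.range fun g : Γ => toCMap (Φ g)) := by
  classical
  rw [Metric.totallyBounded_iff]
  intro ε hε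
  set SC := Set.range fun g : Γ => toCMap (Φ g) with hSC
  obtain ⟨δ, hδ, H⟩ := heqc (ε / 5) (by positivity)
  obtain ⟨t₁, hft₁, ht₁⟩ := Metric.totallyBounded_iff.mp (isCompact_univ : IsCompact (Set.univ : Set X)).totallyBounded δ hδ
  obtain ⟨t₂, hft₂, ht₂⟩ :=
    Metric.totallyBounded_iff.mp (isCompact_univ : IsCompact (Set.univ : Set X)).totallyBounded (ε / 5) (by positivity)
  haveI : Finite ↥t₁ := hft₁.to_subtype
  haveI : Finite ↥t₂ := hft₂.to_subtype
  have hsel : ∀ (f : C(X, X)) (x : X), ∃ c : ↥t₂, dist (f x) (c : X) < ε / 5 := by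
    intro f x
    have := ht₂ (mem_univ (f x))
    simp only [mem_iUnion] at this
    obtain ⟨c, hc, hd⟩ := this
    exact ⟨⟨c, hc⟩, Metric.mem_ball.mp hd⟩
  set sig : ↥SC → (↥t₁ → ↥t₂) := fun f i => (hsel f.1 i.1).choose with hsig
  haveI : Finite (↥t₁ → ↥t₂) := inferInstance
  set P : (↥t₁ → ↥t₂) → Prop := fun σ => ∃ f : ↥SC, sig f = σ with hP
  set t : Set C(X, X) := Set.range (fun σ : {σ // P σ} => ((σ.2).choose : ↥SC).1) with ht
  refine ⟨t, Set.finite_range _, ?_⟩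
  intro f hf
  set σ : ↥t₁ → ↥t₂ := sig ⟨f, hf⟩ with hσ
  have hPσ : P σ := ⟨⟨f, hf⟩, rfl⟩
  set rep := (hPσ.choose : ↥SC) with hrep
  have hrepsig : sig rep = σ := hPσ.choose_spec
  simp only [mem_iUnion]
  refine ⟨rep.1, ⟨⟨σ, hPσ⟩, rfl⟩, ?_⟩
  rw [Metric.mem_ball, ContinuousMap.dist_lt_iff hε]
  intro x
  have hx := ht₁ (mem_univ x)
  simp only [mem_iUnion] at hx
  obtain ⟨i, hi, hd⟩ := hx
  rw [Metric.mem_ball] at hd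
  -- f and rep.1 are both of the form toCMap (Φ g)
  obtain ⟨g₁, hg₁⟩ := hf
  obtain ⟨g₂, hg₂⟩ := rep.2
  have e1 : dist (f x) (f i) < ε / 5 := by rw [← hg₁]; exact H x i hd g₁
  have e2 : dist (rep.1 x) (rep.1 i) < ε / 5 := by rw [← hg₂]; exact H x i hd g₂
  have e3 : dist (f i) ((σ ⟨i, hi⟩ : ↥t₂) : X) < ε / 5 := by
    have := (hsel f i).choose_spec
    exact this
  have e4 : dist (rep.1 i) ((σ ⟨i, hi⟩ : ↥t₂) : X) < ε / 5 := by
    have := (hsel rep.1 i).choose_spec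
    rw [show (hsel rep.1 i).choose = sig rep ⟨i, hi⟩ from rfl, hrepsig] at this
    exact this
  calc dist (f x) (rep.1 x)
      ≤ dist (f x) (f i) + dist (f i) (rep.1 i) + dist (rep.1 i) (rep.1 x) :=
        dist_triangle4 _ _ _ _
    _ ≤ dist (f x) (f i) + (dist (f i) ((σ ⟨i, hi⟩ : ↥t₂) : X)
          + dist ((σ ⟨i, hi⟩ : ↥t₂) : X) (rep.1 i)) + dist (rep.1 i) (rep.1 x) := by
        gcongr
        exact dist_triangle _ _ _
    _ < ε / 5 + (ε / 5 + ε / 5) + ε / 5 := by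
        refine add_lt_add (add_lt_add e1 (add_lt_add e3 ?_)) ?_
        · rw [dist_comm]; exact e4
        · rw [dist_comm]; exact e2
    _ < ε := by linarith


/-- `G(Φ)` is a compact subset of the homeomorphism group. -/
theorem isCompact_pc [Nonempty X] (Φ : Γ →* (X ≃ₜ X)) (heqc : IsEquicontinuousAction Φ) :
    IsCompact ((profiniteClosure Φ : Subgroup (X ≃ₜ X)) : Set (X ≃ₜ X)) := by
  apply IsSeqCompact.isCompact
  intro u hu
  set SC := Set.range fun g : Γ => toCMap (Φ g) with hSC
  have hK : IsCompact (closure SC) :=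
    TotallyBounded.isCompact_of_isClosed
      (totallyBounded_toCMap Φ heqc).closure isClosed_closure
  have hmem : ∀ f : X ≃ₜ X, f ∈ profiniteClosure Φ → toCMap f ∈ closure SC := by
    intro f hf
    rw [Metric.mem_closure_iff]
    intro ε hε
    obtain ⟨g, hg⟩ := (mem_pc_iff Φ f).mp hf ε hε
    exact ⟨toCMap (Φ g), ⟨g, rfl⟩, hg⟩
  -- first subsequence : forward maps converge
  obtain ⟨F, hF, φ, hφ, hφt⟩ := hK.isSeqCompact (fun n => hmem (u n) (hu n))
  -- second subsequence : inverses converge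
  have hui : ∀ n, (u (φ n))⁻¹ ∈ profiniteClosure Φ := fun n => inv_mem (hu (φ n))
  obtain ⟨H, hHm, ψ, hψ, hψt⟩ := hK.isSeqCompact (fun n => hmem ((u (φ n))⁻¹) (hui n))
  set θ : ℕ → ℕ := φ ∘ ψ with hθ
  have hθmono : StrictMono θ := hφ.comp hψ
  have ht1 : Filter.Tendsto (fun n => toCMap (u (θ n))) Filter.atTop (nhds F) :=
    hφt.comp hψ.tendsto_atTop
  have ht2 : Filter.Tendsto (fun n => toCMap ((u (θ n))⁻¹)) Filter.atTop (nhds H) := hψt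
  -- key identity
  have key : ∀ (v : ℕ → X ≃ₜ X), (∀ n, v n ∈ profiniteClosure Φ) →
      ∀ (F' H' : C(X, X)), Filter.Tendsto (fun n => toCMap (v n)) Filter.atTop (nhds F') →
      Filter.Tendsto (fun n => toCMap ((v n)⁻¹)) Filter.atTop (nhds H') →
      ∀ x : X, F' (H' x) = x := by
    intro v hv F' H' htF htH x
    by_contra hne
    set ε := dist (F' (H' x)) x with hε
    have hεpos : 0 < ε := dist_pos.mpr hne
    obtain ⟨δ, hδ, hUE⟩ := ue_closure Φ heqc (ε / 2) (by positivity)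
    obtain ⟨N₁, hN₁⟩ := (Metric.tendsto_atTop.mp htF) (ε / 2) (by positivity)
    obtain ⟨N₂, hN₂⟩ := (Metric.tendsto_atTop.mp htH) δ hδ
    set n := max N₁ N₂
    have e1 : dist (toCMap (v n)) F' < ε / 2 := hN₁ n (le_max_left _ _)
    have e2 : dist (toCMap ((v n)⁻¹)) H' < δ := hN₂ n (le_max_right _ _)
    have e3 : dist (H' x) ((v n)⁻¹ x) < δ := by
      have h7 := ContinuousMap.dist_apply_le_dist (f := toCMap ((v n)⁻¹)) (g := H') x
      rw [dist_comm (((toCMap ((v n)⁻¹))) x) (H' x)] at h7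
      exact lt_of_le_of_lt h7 e2
    have e4 : dist (v n (H' x)) (v n ((v n)⁻¹ x)) < ε / 2 := hUE (v n) (hv n) _ _ e3
    have e5 : v n ((v n)⁻¹ x) = x := by
      rw [Homeomorph.inv_eq_symm]
      exact Homeomorph.apply_symm_apply _ x
    have e6 : dist (F' (H' x)) (v n (H' x)) < ε / 2 := by
      have := ContinuousMap.dist_apply_le_dist (f := toCMap (v n)) (g := F') (H' x)
      rw [dist_comm] at this
      exact lt_of_le_of_lt this e1
    have : ε < ε := by
      calc ε = dist (F' (H' x)) x := hε
        _ ≤ dist (F' (H' x)) (v n (H' x)) + dist (v n (H' x)) x := dist_triangle _ _ _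
        _ < ε / 2 + ε / 2 := by
            refine add_lt_add e6 ?_
            have e7 : dist (v n (H' x)) x = dist (v n (H' x)) (v n ((v n)⁻¹ x)) := by
              rw [e5]
            rw [e7]
            exact e4
        _ = ε := by ring
    exact absurd this (lt_irrefl ε)
  have hFH : ∀ x, F (H x) = x :=
    key (fun n => u (θ n)) (fun n => hu (θ n)) F H ht1 ht2
  have hHF : ∀ x, H (F x) = x := by
    refine key (fun n => (u (θ n))⁻¹) (fun n => inv_mem (hu (θ n))) H F ht2 ?_ 
    simpa only [inv_inv] using ht1
  set f : X ≃ₜ X :=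
    ⟨⟨F, H, fun x => hHF x, fun x => hFH x⟩, F.continuous, H.continuous⟩ with hf
  have hfc : toCMap f = F := by
    apply ContinuousMap.ext
    intro x
    rfl
  have htendf : Filter.Tendsto (fun n => u (θ n)) Filter.atTop (nhds f) := by
    rw [Metric.tendsto_atTop]
    intro ε hε
    obtain ⟨N, hN⟩ := Metric.tendsto_atTop.mp ht1 ε hε
    exact ⟨N, fun n hn => by
      have := hN n hn
      rw [← hfc] at this
      exact this⟩
  have hfm : f ∈ profiniteClosure Φ := by
    have hcl : IsClosed ((profiniteClosure Φ : Subgroup (X ≃ₜ X)) : Set (X ≃ₜ X)) :=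
      Subgroup.isClosed_topologicalClosure _
    exact hcl.mem_of_tendsto htendf (Filter.Eventually.of_forall fun n => hu (θ n))
  exact ⟨f, hfm, θ, hθmono, htendf⟩

/-- Transitivity of `G(Φ)` on `X` for minimal actions. -/
theorem exists_pc_smul [Nonempty X] (Φ : Γ →* (X ≃ₜ X)) (hmin : IsMinimalAction Φ)
    (heqc : IsEquicontinuousAction Φ) (x y : X) :
    ∃ f ∈ profiniteClosure Φ, f x = y := by
  have hseq := (isCompact_pc Φ heqc).isSeqCompact
  have hg : ∀ n : ℕ, ∃ g : Γ, dist (Φ g x) y < 1 / (n + 1) := by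
    intro n
    have hy := hmin x y
    obtain ⟨b, hb, hd⟩ := Metric.mem_closure_iff.mp hy (1 / (n + 1)) (by positivity)
    obtain ⟨g, rfl⟩ := hb
    exact ⟨g, by rwa [dist_comm]⟩
  choose g hgd using hg
  have hmem : ∀ n : ℕ, Φ (g n) ∈ (profiniteClosure Φ : Subgroup (X ≃ₜ X)) :=
    fun n => pc_mem_of_mem_range Φ (g n)
  obtain ⟨f, hf, φ, hφ, htend⟩ := hseq hmem
  refine ⟨f, hf, ?_⟩
  by_contra hne
  set ε := dist (f x) y with hε
  have hεpos : 0 < ε := dist_pos.mpr hne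
  obtain ⟨N₁, hN₁⟩ := Metric.tendsto_atTop.mp htend (ε / 2) (by positivity)
  obtain ⟨N₂, hN₂⟩ := exists_nat_one_div_lt (show (0:ℝ) < ε / 2 by positivity)
  set n := max N₁ N₂
  have e1 : dist (Φ (g (φ n)) x) (f x) ≤ dist (Φ (g (φ n))) f :=
    Homeomorph.dist_apply_le _ _ x
  have e2 : dist (Φ (g (φ n))) f < ε / 2 := hN₁ n (le_max_left _ _)
  have e3 : dist (Φ (g (φ n)) x) y < ε / 2 := by
    have h4 : (1 : ℝ) / (φ n + 1) ≤ 1 / (n + 1) := by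
      apply one_div_le_one_div_of_le (by positivity)
      have h6 : n ≤ φ n := hφ.le_apply
      push_cast
      have : (n : ℝ) ≤ (φ n : ℝ) := by exact_mod_cast h6
      linarith
    have h5 : (1 : ℝ) / (n + 1) ≤ 1 / (N₂ + 1) := by
      apply one_div_le_one_div_of_le (by positivity)
      have : (N₂ : ℝ) ≤ n := by exact_mod_cast le_max_right N₁ N₂
      linarith
    calc dist (Φ (g (φ n)) x) y < 1 / (φ n + 1) := hgd (φ n)
      _ ≤ 1 / (N₂ + 1) := le_trans h4 h5
      _ < ε / 2 := hN₂
  have : ε < ε := by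
    calc ε = dist (f x) y := hε
      _ ≤ dist (f x) (Φ (g (φ n)) x) + dist (Φ (g (φ n)) x) y := dist_triangle _ _ _
      _ < ε / 2 + ε / 2 := by
          refine add_lt_add ?_ e3
          rw [dist_comm]
          exact lt_of_le_of_lt e1 e2
      _ = ε := by ring
  exact absurd this (lt_irrefl ε)

/-- Positive separation of a clopen set from its complement. -/
theorem clopen_gap {W : Set X} (hW : IsClopen W) :
    ∃ δ > 0, ∀ a b : X, dist a b < δ → a ∈ W → b ∈ W := by
  rcases eq_empty_or_nonempty W with rfl | hne
  · exact ⟨1, one_pos, fun a b _ h => h.elim⟩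
  rcases eq_empty_or_nonempty Wᶜ with hc | hc
  · have huniv : W = univ := by
      rw [← compl_empty_iff, ← hc]
    exact ⟨1, one_pos, fun a b _ _ => huniv ▸ mem_univ b⟩
  have hWcpt : IsCompact W := hW.isClosed.isCompact
  have hcont : Continuous fun a : X => Metric.infDist a Wᶜ := Metric.continuous_infDist_pt _
  obtain ⟨a₀, ha₀, hminOn⟩ := hWcpt.exists_isMinOn hne hcont.continuousOn
  have hδpos : 0 < Metric.infDist a₀ Wᶜ := by
    rw [← (hW.isOpen.isClosed_compl).notMem_iff_infDist_pos hc]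
    simpa using ha₀
  refine ⟨Metric.infDist a₀ Wᶜ, hδpos, fun a b hab haW => ?_⟩
  by_contra hbW
  have h1 : Metric.infDist a Wᶜ ≤ dist a b := Metric.infDist_le_dist_of_mem hbW
  have h2 : Metric.infDist a₀ Wᶜ ≤ Metric.infDist a Wᶜ := (isMinOn_iff.mp hminOn) a haW
  linarith

theorem clopen_gap_iff {U : Set X} (hU : IsClopen U) :
    ∃ δ > 0, ∀ a b : X, dist a b < δ → (a ∈ U ↔ b ∈ U) := by
  obtain ⟨δ₁, h1, H1⟩ := clopen_gap hU
  obtain ⟨δ₂, h2, H2⟩ := clopen_gap hU.compl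
  refine ⟨min δ₁ δ₂, lt_min h1 h2, fun a b hab => ⟨fun h => ?_, fun h => ?_⟩⟩
  · exact H1 a b (hab.trans_le (min_le_left _ _)) h
  · by_contra ha
    exact H2 a b (hab.trans_le (min_le_right _ _)) ha h

/-- Homeomorphisms close to one preserving a clopen set also preserve it. -/
theorem image_eq_of_close {U : Set X} {δ : ℝ}
    (hδ : ∀ a b : X, dist a b < δ → (a ∈ U ↔ b ∈ U))
    {f h : X ≃ₜ X} (hfh : dist f h < δ) (hh : h '' U = U) : f '' U = U := by
  have h1 : ∀ a ∈ U, f a ∈ U := by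
    intro a ha
    have hha : h a ∈ U := hh ▸ mem_image_of_mem _ ha
    refine (hδ (f a) (h a) ?_).mpr hha
    exact lt_of_le_of_lt (Homeomorph.dist_apply_le f h a) hfh
  have hcompl : h '' Uᶜ = Uᶜ := by
    rw [Set.image_compl_eq h.bijective, hh]
  have h2 : ∀ a ∈ Uᶜ, f a ∈ Uᶜ := by
    intro a ha
    have hha : h a ∈ Uᶜ := hcompl ▸ mem_image_of_mem _ ha
    intro hfa
    exact hha ((hδ (f a) (h a) (lt_of_le_of_lt (Homeomorph.dist_apply_le f h a) hfh)).mp hfa)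
  apply Set.eq_of_subset_of_subset
  · exact Set.image_subset_iff.mpr h1
  · intro a ha
    by_cases hsym : f.symm a ∈ U
    · exact ⟨f.symm a, hsym, f.apply_symm_apply a⟩
    · exact absurd (h2 _ hsym) (by rw [f.apply_symm_apply]; simpa using ha)

/-- Elements of `G(Φ)` moving a point of an adapted set inside it preserve the set. -/
theorem image_eq_of_adapted {Φ : Γ →* (X ≃ₜ X)} {U : Set X}
    (hU : IsAdaptedSet Φ U) {f : X ≃ₜ X} (hf : f ∈ profiniteClosure Φ)
    {u : X} (huU : u ∈ U) (hfu : f u ∈ U) : f '' U = U := by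
  obtain ⟨δ, hδ0, hδ⟩ := clopen_gap_iff hU.2.1
  obtain ⟨g, hg⟩ := (mem_pc_iff Φ f).mp hf δ hδ0
  have hgu : Φ g u ∈ U := by
    refine (hδ (Φ g u) (f u) ?_).mpr hfu
    rw [dist_comm] at hg
    exact lt_of_le_of_lt (Homeomorph.dist_apply_le (Φ g) f u) hg
  have hgU : Φ g '' U = U := hU.2.2 g ⟨Φ g u, mem_image_of_mem _ huU, hgu⟩
  exact image_eq_of_close hδ hg hgU

/-- Restriction to an invariant closed set does not increase distances. -/
theorem restrict_dist_le {U : Set X} [CompactSpace ↥U] {f h : X ≃ₜ X}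
    (hf : f '' U = U) (hh : h '' U = U) :
    dist (restrictHomeo f hf) (restrictHomeo h hh) ≤ dist f h := by
  apply homeo_dist_le dist_nonneg
  intro x
  have : dist ((restrictHomeo f hf) x : X) ((restrictHomeo h hh) x : X) ≤ dist f h := by
    simp only [restrictHomeo_coe]
    exact Homeomorph.dist_apply_le f h (x : X)
  rwa [Subtype.dist_eq]

end GeomAux

section MainAux

open Set

/-- The isotropy subgroup of a point inside a subgroup of homeomorphisms. -/
def stabOf {Y : Type*} [TopologicalSpace Y] (Q : Subgroup (Y ≃ₜ Y)) (y : Y) : Subgroup ↥Q where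
  carrier := { h | ((h : Y ≃ₜ Y)) y = y }
  one_mem' := rfl
  mul_mem' := by
    intro a b ha hb
    simp only [Set.mem_setOf_eq] at *
    show ((a : Y ≃ₜ Y) * (b : Y ≃ₜ Y)) y = y
    rw [Homeomorph.mul_apply, hb, ha]
  inv_mem' := by
    intro a ha
    simp only [Set.mem_setOf_eq] at *
    show ((a : Y ≃ₜ Y)⁻¹) y = y
    rw [Homeomorph.inv_eq_symm]
    conv_lhs => rw [← ha]
    exact Homeomorph.symm_apply_apply _ _

theorem mem_stabOf {Y : Type*} [TopologicalSpace Y] {Q : Subgroup (Y ≃ₜ Y)} {y : Y}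
    {a : ↥Q} : a ∈ stabOf Q y ↔ ((a : Y ≃ₜ Y)) y = y := Iff.rfl

variable {X : Type*} [MetricSpace X] [CompactSpace X] {Γ : Type*} [Group Γ]

theorem discriminant_eq_stabOf (Φ : Γ →* (X ≃ₜ X)) (x : X) :
    discriminant Φ x = stabOf (profiniteClosure Φ) x := by
  ext a
  exact Iff.rfl

/-- Independence of the relative Steinitz order from the basepoint. -/
theorem steinitzOrderRel_basepoint [Nonempty X] (Φ : Γ →* (X ≃ₜ X))
    (hmin : IsMinimalAction Φ) (heqc : IsEquicontinuousAction Φ) (x y : X) :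
    steinitzOrderRel Φ x = steinitzOrderRel Φ y := by
  obtain ⟨f, hf, hfxy⟩ := exists_pc_smul Φ hmin heqc x y
  haveI : CompactSpace ↥(profiniteClosure Φ) :=
    isCompact_iff_compactSpace.mp (isCompact_pc Φ heqc)
  set a : ↥(profiniteClosure Φ) := ⟨f, hf⟩ with ha
  set e := MulAut.conj a with he
  have hc : Continuous (⇑e.toMonoidHom) := by
    show Continuous fun b : ↥(profiniteClosure Φ) => a * b * a⁻¹
    exact (continuous_mul_right a⁻¹).comp (continuous_mul_left a)
  have hker : e.toMonoidHom.ker ≤ discriminant Φ x := by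
    intro b hb
    have hb1 : b = 1 := by
      have h2 : e b = 1 := hb
      have h3 := congrArg e.symm h2
      rwa [MulEquiv.symm_apply_apply, map_one] at h3
    rw [hb1]
    exact (discriminant Φ x).one_mem
  have hD : Subgroup.map e.toMonoidHom (discriminant Φ x) = discriminant Φ y := by
    ext b
    constructor
    · rintro ⟨d, hd, rfl⟩
      have hd' : (d : X ≃ₜ X) x = x := hd
      show ((e.toMonoidHom d : ↥(profiniteClosure Φ)) : X ≃ₜ X) y = y
      have hval : ((e.toMonoidHom d : ↥(profiniteClosure Φ)) : X ≃ₜ X)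
          = f * (d : X ≃ₜ X) * f⁻¹ := rfl
      rw [hval]
      show (f * (d : X ≃ₜ X) * f⁻¹) y = y
      rw [Homeomorph.mul_apply, Homeomorph.mul_apply, Homeomorph.inv_eq_symm]
      rw [← hfxy, Homeomorph.symm_apply_apply, hd', hfxy]
    · intro hb
      have hb' : (b : X ≃ₜ X) y = y := hb
      refine ⟨a⁻¹ * b * a, ?_, ?_⟩
      · show (((a⁻¹ * b * a : ↥(profiniteClosure Φ))) : X ≃ₜ X) x = x
        have hval : (((a⁻¹ * b * a : ↥(profiniteClosure Φ))) : X ≃ₜ X)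
            = f⁻¹ * (b : X ≃ₜ X) * f := rfl
        rw [hval]
        show (f⁻¹ * (b : X ≃ₜ X) * f) x = x
        rw [Homeomorph.mul_apply, Homeomorph.mul_apply, hfxy, hb', Homeomorph.inv_eq_symm,
          ← hfxy, Homeomorph.symm_apply_apply]
      · show a * (a⁻¹ * b * a) * a⁻¹ = b
        group
  have hre := steinitzRelativeOrder_map_eq e.toMonoidHom hc e.surjective
    (discriminant Φ x) hker
  rw [hD] at hre
  show steinitzRelativeOrder (discriminant Φ x) = steinitzRelativeOrder (discriminant Φ y)
  exact hre.symm

/-- The main one-sided reduction: the relative Steinitz order of the action is asymptotically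
the relative Steinitz order of the closed holonomy group of an adapted set. -/
theorem side_lemma [Nonempty X] (Φ : Γ →* (X ≃ₜ X)) (heqc : IsEquicontinuousAction Φ)
    {U : Set X} [CompactSpace ↥U] (hU : IsAdaptedSet Φ U) {x : X} (hx : x ∈ U) :
    SteinitzNum.AsympEquiv (steinitzOrderRel Φ x)
      (steinitzRelativeOrder (stabOf ((holonomyGroup Φ U).topologicalClosure) ⟨x, hx⟩))
    ∧ IsCompact (((holonomyGroup Φ U).topologicalClosure :
        Subgroup (↥U ≃ₜ ↥U)) : Set (↥U ≃ₜ ↥U)) := by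
  haveI : CompactSpace ↥(profiniteClosure Φ) :=
    isCompact_iff_compactSpace.mp (isCompact_pc Φ heqc)
  set Gc := profiniteClosure Φ with hGc
  set G' : Subgroup ↥Gc := adaptedStabilizer Gc.subtype U with hG'
  obtain ⟨δ, hδ0, hδ⟩ := clopen_gap_iff hU.2.1
  have hmemG' : ∀ a : ↥Gc, a ∈ G' ↔ ((a : X ≃ₜ X) '' U = U) := fun a => Iff.rfl
  have hG'open : IsOpen ((G' : Subgroup ↥Gc) : Set ↥Gc) := by
    rw [Metric.isOpen_iff]
    intro a ha
    refine ⟨δ, hδ0, fun b hb => ?_⟩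
    have hdist : dist (b : X ≃ₜ X) (a : X ≃ₜ X) < δ := hb
    exact (hmemG' b).mpr (image_eq_of_close hδ hdist ((hmemG' a).mp ha))
  have hDle : discriminant Φ x ≤ G' := by
    intro a haD
    have hax : (a : X ≃ₜ X) x = x := haD
    refine (hmemG' a).mpr (image_eq_of_adapted hU a.2 hx ?_)
    rw [hax]; exact hx
  set ρ₀ := holonomyHom Gc.subtype U with hρ₀
  have hρ₀dist : ∀ a b : ↥G', dist (ρ₀ a) (ρ₀ b) ≤ dist a b := by
    intro a b
    exact restrict_dist_le (f := ((a : ↥Gc) : X ≃ₜ X)) (h := ((b : ↥Gc) : X ≃ₜ X)) a.2 b.2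
  have hρ₀cont : Continuous ρ₀ := by
    refine (LipschitzWith.of_dist_le_mul (K := 1) fun a b => ?_).continuous
    rw [NNReal.coe_one, one_mul]
    exact hρ₀dist a b
  set Q := (holonomyGroup Φ U).topologicalClosure with hQ
  have hr1 : ∀ a : ↥G', ρ₀ a ∈ Q := by
    intro a
    have hcl : ρ₀ a ∈ closure ((holonomyGroup Φ U : Subgroup (↥U ≃ₜ ↥U)) : Set (↥U ≃ₜ ↥U)) := by
      rw [Metric.mem_closure_iff]
      intro ε hε
      obtain ⟨g, hg⟩ := (mem_pc_iff Φ ((a : ↥Gc) : X ≃ₜ X)).mp (a : ↥Gc).2 (min ε δ)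
        (lt_min hε hδ0)
      have hgd : dist (Φ g) ((a : ↥Gc) : X ≃ₜ X) < δ := by
        rw [dist_comm]
        exact hg.trans_le (min_le_right _ _)
      have hgU : Φ g '' U = U := image_eq_of_close hδ hgd a.2
      refine ⟨holonomyHom Φ U ⟨g, hgU⟩, ⟨⟨g, hgU⟩, rfl⟩, ?_⟩
      have hdle : dist (ρ₀ a) (holonomyHom Φ U ⟨g, hgU⟩)
          ≤ dist ((a : ↥Gc) : X ≃ₜ X) (Φ g) :=
        restrict_dist_le _ _
      exact lt_of_le_of_lt hdle (hg.trans_le (min_le_left _ _))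
    exact hcl
  have hG'closed : IsClosed ((G' : Subgroup ↥Gc) : Set ↥Gc) :=
    Subgroup.isClosed_of_isOpen _ hG'open
  haveI : CompactSpace ↥G' := isCompact_iff_compactSpace.mp hG'closed.isCompact
  have hRcpt : IsCompact (Set.range ρ₀) := isCompact_range hρ₀cont
  have hr2 : (Q : Set (↥U ≃ₜ ↥U)) ⊆ Set.range ρ₀ := by
    have hsub : ((holonomyGroup Φ U : Subgroup (↥U ≃ₜ ↥U)) : Set (↥U ≃ₜ ↥U))
        ⊆ Set.range ρ₀ := by
      rintro b ⟨s, rfl⟩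
      refine ⟨⟨⟨Φ s.1, pc_mem_of_mem_range Φ s.1⟩, s.2⟩, rfl⟩
    calc (Q : Set (↥U ≃ₜ ↥U))
        = closure ((holonomyGroup Φ U : Subgroup (↥U ≃ₜ ↥U)) : Set (↥U ≃ₜ ↥U)) := rfl
      _ ⊆ closure (Set.range ρ₀) := closure_mono hsub
      _ = Set.range ρ₀ := hRcpt.isClosed.closure_eq
  have hQcpt : IsCompact (Q : Set (↥U ≃ₜ ↥U)) :=
    hRcpt.of_isClosed_subset (Subgroup.isClosed_topologicalClosure _) hr2
  set ρ : ↥G' →* ↥Q := ρ₀.codRestrict Q hr1 with hρ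
  have hρcont : Continuous ρ := Continuous.subtype_mk hρ₀cont _
  have hρsurj : Function.Surjective ρ := by
    rintro ⟨q, hq⟩
    obtain ⟨a, ha⟩ := hr2 hq
    exact ⟨a, Subtype.ext ha⟩
  have hker : ρ.ker ≤ (discriminant Φ x).subgroupOf G' := by
    intro a haK
    have h1 : ρ₀ a = 1 := congrArg Subtype.val haK
    refine Subgroup.mem_subgroupOf.mpr ?_
    show ((a : ↥Gc) : X ≃ₜ X) x = x
    have h2 : ((ρ₀ a) ⟨x, hx⟩ : X) = x := by rw [h1]; rfl
    exact h2
  have hmap : Subgroup.map ρ ((discriminant Φ x).subgroupOf G') = stabOf Q ⟨x, hx⟩ := by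
    ext q
    constructor
    · rintro ⟨a, haD, rfl⟩
      have haD' : ((a : ↥Gc) : X ≃ₜ X) x = x := Subgroup.mem_subgroupOf.mp haD
      rw [mem_stabOf]
      show (ρ₀ a) ⟨x, hx⟩ = (⟨x, hx⟩ : ↥U)
      apply Subtype.ext
      exact haD'
    · intro hq
      obtain ⟨a, ha⟩ := hρsurj q
      refine ⟨a, Subgroup.mem_subgroupOf.mpr ?_, ha⟩
      show ((a : ↥Gc) : X ≃ₜ X) x = x
      have h2 : ((q : ↥U ≃ₜ ↥U)) ⟨x, hx⟩ = ⟨x, hx⟩ := hq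
      rw [← ha] at h2
      have h3 := congrArg Subtype.val h2
      exact h3
  have hstep1 := steinitzRelativeOrder_asympEquiv_subgroupOf G' hG'open
    (discriminant Φ x) hDle
  have hstep2 := steinitzRelativeOrder_map_eq ρ hρcont hρsurj
    ((discriminant Φ x).subgroupOf G') hker
  rw [hmap] at hstep2
  refine ⟨?_, hQcpt⟩
  show SteinitzNum.AsympEquiv (steinitzRelativeOrder (discriminant Φ x)) _
  exact hstep1.trans (SteinitzNum.AsympEquiv.of_eq hstep2.symm)

end MainAux

section BridgeAux

open Set

variable {Y₁ : Type*} {Y₂ : Type*} [MetricSpace Y₁] [CompactSpace Y₁]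
  [MetricSpace Y₂] [CompactSpace Y₂]

/-- Conjugation of homeomorphism groups by a fixed homeomorphism. -/
def conjHomeoHom (h : Y₁ ≃ₜ Y₂) : (Y₁ ≃ₜ Y₁) →* (Y₂ ≃ₜ Y₂) where
  toFun k := h.symm.trans (k.trans h)
  map_one' := by
    ext z
    simp [Homeomorph.trans_apply]
  map_mul' := by
    intro k l
    ext z
    simp only [Homeomorph.trans_apply, Homeomorph.mul_apply, Homeomorph.symm_apply_apply]

theorem conjHomeoHom_apply (h : Y₁ ≃ₜ Y₂) (k : Y₁ ≃ₜ Y₁) (z : Y₂) :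
    conjHomeoHom h k z = h (k (h.symm z)) := rfl

theorem conjHomeoHom_left_inv (h : Y₁ ≃ₜ Y₂) (k : Y₁ ≃ₜ Y₁) :
    conjHomeoHom h.symm (conjHomeoHom h k) = k := by
  ext z
  simp [conjHomeoHom_apply]

theorem conjHomeoHom_right_inv (h : Y₁ ≃ₜ Y₂) (k : Y₂ ≃ₜ Y₂) :
    conjHomeoHom h (conjHomeoHom h.symm k) = k := by
  ext z
  simp [conjHomeoHom_apply]

theorem conjHomeoHom_continuous (h : Y₁ ≃ₜ Y₂) : Continuous (conjHomeoHom h) := by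
  rw [Metric.continuous_iff]
  intro k₀ ε hε
  obtain ⟨δ, hδ, Hu⟩ := Metric.uniformContinuous_iff.mp
    (CompactSpace.uniformContinuous_of_continuous h.continuous) ε hε
  refine ⟨δ, hδ, fun k hk => ?_⟩
  rw [Homeomorph.dist_lt_iff' _ _ hε]
  intro z
  rw [conjHomeoHom_apply, conjHomeoHom_apply]
  apply Hu
  exact lt_of_le_of_lt (Homeomorph.dist_apply_le k k₀ (h.symm z)) hk

/-- The bridge: conjugate holonomy data give equal relative Steinitz orders. -/
theorem bridge_eq (h : Y₁ ≃ₜ Y₂) (H₁ : Subgroup (Y₁ ≃ₜ Y₁)) (H₂ : Subgroup (Y₂ ≃ₜ Y₂))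
    (hcpt : IsCompact ((H₁.topologicalClosure : Subgroup (Y₁ ≃ₜ Y₁)) : Set (Y₁ ≃ₜ Y₁)))
    (hconj : ∀ k : Y₁ ≃ₜ Y₁, k ∈ H₁ → conjHomeoHom h k ∈ H₂)
    (hconj' : ∀ k : Y₂ ≃ₜ Y₂, k ∈ H₂ → conjHomeoHom h.symm k ∈ H₁)
    (y : Y₁) :
    steinitzRelativeOrder (stabOf H₁.topologicalClosure y)
      = steinitzRelativeOrder (stabOf H₂.topologicalClosure (h y)) := by
  haveI : CompactSpace ↥(H₁.topologicalClosure) := isCompact_iff_compactSpace.mp hcpt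
  have hF : ∀ k, k ∈ H₁.topologicalClosure → conjHomeoHom h k ∈ H₂.topologicalClosure := by
    intro k hk
    exact map_mem_closure (conjHomeoHom_continuous h) hk fun b hb => hconj b hb
  have hG : ∀ k, k ∈ H₂.topologicalClosure → conjHomeoHom h.symm k ∈ H₁.topologicalClosure := by
    intro k hk
    exact map_mem_closure (conjHomeoHom_continuous h.symm) hk fun b hb => hconj' b hb
  set ρ : ↥(H₁.topologicalClosure) →* ↥(H₂.topologicalClosure) :=
    ((conjHomeoHom h).comp (H₁.topologicalClosure).subtype).codRestrict _
      (fun a => hF _ a.2) with hρ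
  have hρc : Continuous ρ :=
    Continuous.subtype_mk ((conjHomeoHom_continuous h).comp continuous_subtype_val) _
  have hρs : Function.Surjective ρ := by
    rintro ⟨q, hq⟩
    exact ⟨⟨conjHomeoHom h.symm q, hG q hq⟩, Subtype.ext (conjHomeoHom_right_inv h q)⟩
  have hker : ρ.ker ≤ stabOf H₁.topologicalClosure y := by
    intro a haK
    have h1 : conjHomeoHom h (a : Y₁ ≃ₜ Y₁) = 1 := congrArg Subtype.val haK
    have h2 : (a : Y₁ ≃ₜ Y₁) = 1 := by
      have h3 := congrArg (conjHomeoHom h.symm) h1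
      rwa [conjHomeoHom_left_inv, map_one] at h3
    show ((a : Y₁ ≃ₜ Y₁)) y = y
    rw [h2]
    rfl
  have hmap : Subgroup.map ρ (stabOf H₁.topologicalClosure y)
      = stabOf H₂.topologicalClosure (h y) := by
    ext q
    constructor
    · rintro ⟨a, haS, rfl⟩
      have ha' : (a : Y₁ ≃ₜ Y₁) y = y := haS
      show conjHomeoHom h (a : Y₁ ≃ₜ Y₁) (h y) = h y
      rw [conjHomeoHom_apply, Homeomorph.symm_apply_apply, ha']
    · intro hq
      obtain ⟨a, ha⟩ := hρs q
      refine ⟨a, ?_, ha⟩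
      show ((a : Y₁ ≃ₜ Y₁)) y = y
      have h2 : ((q : ↥(H₂.topologicalClosure)) : Y₂ ≃ₜ Y₂) (h y) = h y := hq
      rw [← ha] at h2
      have h3 : conjHomeoHom h (a : Y₁ ≃ₜ Y₁) (h y) = h y := h2
      rw [conjHomeoHom_apply, Homeomorph.symm_apply_apply] at h3
      exact h.injective h3
  have hfin := steinitzRelativeOrder_map_eq ρ hρc hρs (stabOf H₁.topologicalClosure y) hker
  rw [hmap] at hfin
  exact hfin.symm

end BridgeAux

/-- Two Cantor actions are return equivalent if they admit adapted sets whose holonomy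
actions are isomorphic, via a homeomorphism between the adapted sets together with a
compatible isomorphism of the holonomy groups. -/
def ReturnEquivalent
    {X₁ : Type*} [MetricSpace X₁] {Γ₁ : Type*} [Group Γ₁]
    {X₂ : Type*} [MetricSpace X₂] {Γ₂ : Type*} [Group Γ₂]
    (Φ₁ : Γ₁ →* (X₁ ≃ₜ X₁)) (Φ₂ : Γ₂ →* (X₂ ≃ₜ X₂)) : Prop :=
  ∃ (U₁ : Set X₁) (U₂ : Set X₂), IsAdaptedSet Φ₁ U₁ ∧ IsAdaptedSet Φ₂ U₂ ∧
    ∃ (h : ↥U₁ ≃ₜ ↥U₂) (θ : holonomyGroup Φ₁ U₁ ≃* holonomyGroup Φ₂ U₂),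
      ∀ k : holonomyGroup Φ₁ U₁,
        ((θ k : ↥U₂ ≃ₜ ↥U₂)) = h.symm.trans (((k : ↥U₁ ≃ₜ ↥U₁)).trans h)

section Regularity

variable {X : Type*} [MetricSpace X]

/-- An action of a group `H` on `X` through a homomorphism `ρ : H →* Homeo(X)` is locally
quasi-analytic if there is `ε > 0` so that for every nonempty open `U` of diameter less
than `ε`, any element acting as the identity on a nonempty open subset `V ⊆ U` with
`ρ g (V) = V` acts as the identity on all of `U`. -/
def IsLocallyQuasiAnalytic {H : Type*} [Group H] (ρ : H →* (X ≃ₜ X)) : Prop :=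
  ∃ ε : ℝ, 0 < ε ∧ ∀ U : Set X, IsOpen U → U.Nonempty → Metric.diam U < ε →
    ∀ V : Set X, V ⊆ U → IsOpen V → V.Nonempty →
      ∀ g : H, (ρ g) '' V = V → (∀ x ∈ V, ρ g x = x) → ∀ x ∈ U, ρ g x = x

variable [CompactSpace X] {Γ : Type*} [Group Γ]

/-- A Cantor action is stable if the induced action of `G(Φ)` on `X` is locally
quasi-analytic; otherwise it is wild. -/
def IsStableAction (Φ : Γ →* (X ≃ₜ X)) : Prop :=
  IsLocallyQuasiAnalytic (profiniteClosure Φ).subtype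

/-- An action is topologically free if the set of points fixed by some nontrivial group
element is meagre. -/
def IsTopologicallyFree (Φ : Γ →* (X ≃ₜ X)) : Prop :=
  IsMeagre { x : X | ∃ g : Γ, g ≠ 1 ∧ Φ g x = x }

end Regularity

/-- The relative Steinitz order `Π[G(Φ) : D(Φ,x)]` of a minimal
equicontinuous Cantor action is, up to asymptotic equivalence, an invariant of
return equivalence. -/
theorem steinitzOrderRel_asympEquiv_of_returnEquivalent
    {X₁ : Type*} [MetricSpace X₁] [CompactSpace X₁] [Nonempty X₁] [TotallyDisconnectedSpace X₁]
    (hperf₁ : Perfect (Set.univ : Set X₁))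
    {Γ₁ : Type*} [Group Γ₁] [Countable Γ₁] (Φ₁ : Γ₁ →* (X₁ ≃ₜ X₁))
    (hmin₁ : IsMinimalAction Φ₁) (heqc₁ : IsEquicontinuousAction Φ₁)
    {X₂ : Type*} [MetricSpace X₂] [CompactSpace X₂] [Nonempty X₂] [TotallyDisconnectedSpace X₂]
    (hperf₂ : Perfect (Set.univ : Set X₂))
    {Γ₂ : Type*} [Group Γ₂] [Countable Γ₂] (Φ₂ : Γ₂ →* (X₂ ≃ₜ X₂))
    (hmin₂ : IsMinimalAction Φ₂) (heqc₂ : IsEquicontinuousAction Φ₂)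
    (hre : ReturnEquivalent Φ₁ Φ₂) (x₁ : X₁) (x₂ : X₂) :
    SteinitzNum.AsympEquiv (steinitzOrderRel Φ₁ x₁) (steinitzOrderRel Φ₂ x₂) := by
  obtain ⟨U₁, U₂, hU₁, hU₂, h, θ, hθ⟩ := hre
  obtain ⟨y₁, hy₁⟩ := hU₁.1
  haveI : CompactSpace ↥U₁ := isCompact_iff_compactSpace.mp hU₁.2.1.isClosed.isCompact
  haveI : CompactSpace ↥U₂ := isCompact_iff_compactSpace.mp hU₂.2.1.isClosed.isCompact
  set z : ↥U₂ := h ⟨y₁, hy₁⟩ with hz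
  obtain ⟨hside₁, hcpt₁⟩ := side_lemma Φ₁ heqc₁ hU₁ hy₁
  obtain ⟨hside₂, hcpt₂⟩ := side_lemma Φ₂ heqc₂ hU₂ z.2
  have hconj : ∀ k : ↥U₁ ≃ₜ ↥U₁, k ∈ holonomyGroup Φ₁ U₁ →
      conjHomeoHom h k ∈ holonomyGroup Φ₂ U₂ := by
    intro k hk
    have h1 := hθ ⟨k, hk⟩
    have h2 : conjHomeoHom h k = ((θ ⟨k, hk⟩ : ↥(holonomyGroup Φ₂ U₂)) : ↥U₂ ≃ₜ ↥U₂) := by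
      rw [h1]
      rfl
    rw [h2]
    exact (θ ⟨k, hk⟩).2
  have hconj' : ∀ k : ↥U₂ ≃ₜ ↥U₂, k ∈ holonomyGroup Φ₂ U₂ →
      conjHomeoHom h.symm k ∈ holonomyGroup Φ₁ U₁ := by
    intro k hk
    set j := θ.symm ⟨k, hk⟩ with hj
    have h1 : θ j = ⟨k, hk⟩ := θ.apply_symm_apply _
    have h2 := hθ j
    have h3 : conjHomeoHom h ((j : ↥(holonomyGroup Φ₁ U₁)) : ↥U₁ ≃ₜ ↥U₁) = k := by
      have h4 : ((θ j : ↥(holonomyGroup Φ₂ U₂)) : ↥U₂ ≃ₜ ↥U₂) = k := by rw [h1]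
      rw [← h4, h2]
      rfl
    have h5 := congrArg (conjHomeoHom h.symm) h3
    rw [conjHomeoHom_left_inv] at h5
    rw [← h5]
    exact (j : ↥(holonomyGroup Φ₁ U₁)).2
  have hbr := bridge_eq h (holonomyGroup Φ₁ U₁) (holonomyGroup Φ₂ U₂) hcpt₁ hconj hconj'
    ⟨y₁, hy₁⟩
  have hbase₁ : steinitzOrderRel Φ₁ x₁ = steinitzOrderRel Φ₁ y₁ :=
    steinitzOrderRel_basepoint Φ₁ hmin₁ heqc₁ x₁ y₁
  have hbase₂ : steinitzOrderRel Φ₂ x₂ = steinitzOrderRel Φ₂ (z : X₂) :=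
    steinitzOrderRel_basepoint Φ₂ hmin₂ heqc₂ x₂ (z : X₂)
  refine SteinitzNum.AsympEquiv.trans (SteinitzNum.AsympEquiv.of_eq hbase₁) ?_
  refine SteinitzNum.AsympEquiv.trans hside₁ ?_
  refine SteinitzNum.AsympEquiv.trans (SteinitzNum.AsympEquiv.of_eq hbr) ?_
  refine SteinitzNum.AsympEquiv.trans hside₂.symm ?_
  exact SteinitzNum.AsympEquiv.of_eq hbase₂.symm
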